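/- Suppose λ is real (so β = 0 and λ = α). Then Im(u'(z)·conj(u(z))) < 0 for every nonzero z with −π/6 ≤ arg z ≤ 7π/6 and z ∉ A₁; in other words, Im(u'·conj u) is strictly negative on the closed angular region {r·e^{iθ} : r > 0, −π/6 ≤ θ ≤ 7π/6} with the region A₁ removed. -/

import Mathlib

open Complex Real Filter ComplexConjugate

lemma deriv2_eq {lam : ℂ} {u : ℂ → ℂ}
    (hode : ∀ w : ℂ, iteratedDeriv 2 u w = (Complex.I * w ^ 3 - lam) * u w) :
    ∀ w, deriv (deriv u) w = (Complex.I * w ^ 3 - lam) * u w := by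
  intro w
  have := hode w
  rwa [show (2:ℕ) = 1 + 1 from rfl, iteratedDeriv_succ, iteratedDeriv_one] at this

lemma du_entire {u : ℂ → ℂ} (hu : Differentiable ℂ u) : Differentiable ℂ (deriv u) := by
  have h := (analyticOnNhd_univ_iff_differentiable.2 hu).deriv
  exact fun z => (h z (Set.mem_univ z)).differentiableAt

-- Re(i z^3 - lam) at x + t I
lemma re_q (lam : ℂ) (x t : ℝ) :
    (Complex.I * ((x:ℂ) + t * I) ^ 3 - lam).re = t ^ 3 - 3 * x ^ 2 * t - lam.re := by
  simp [pow_succ, Complex.mul_re, Complex.mul_im, Complex.add_re, Complex.add_im]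
  ring

lemma im_q (lam : ℂ) (hbeta : lam.im = 0) (x t : ℝ) :
    (Complex.I * ((x:ℂ) + t * I) ^ 3 - lam).im = x ^ 3 - 3 * x * t ^ 2 := by
  simp [pow_succ, Complex.mul_re, Complex.mul_im, Complex.add_re, Complex.add_im, hbeta]
  ring

lemma path_h (y : ℝ) (x : ℝ) : HasDerivAt (fun t : ℝ => (t : ℂ) + y * I) 1 x := by
  simpa using (Complex.ofRealCLM.hasDerivAt (x := x)).add_const ((y:ℂ) * I)

lemma path_v (x : ℝ) (t : ℝ) : HasDerivAt (fun s : ℝ => (x : ℂ) + s * I) I t := by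
  have := ((Complex.ofRealCLM.hasDerivAt (x := t)).mul_const I).const_add (x:ℂ)
  simpa using this

lemma comp_path {u : ℂ → ℂ} (hu : Differentiable ℂ u) {p : ℝ → ℂ} {p' : ℂ} {t : ℝ}
    (hp : HasDerivAt p p' t) : HasDerivAt (fun s => u (p s)) (p' * deriv u (p t)) t := by
  have h1 : HasDerivAt u (deriv u (p t)) (p t) := (hu (p t)).hasDerivAt
  have := HasDerivAt.scomp t h1 hp
  simp only [smul_eq_mul] at this
  exact this

lemma hasDerivAt_F {lam : ℂ} {u : ℂ → ℂ} (hu : Differentiable ℂ u)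
    (hode : ∀ w : ℂ, iteratedDeriv 2 u w = (Complex.I * w ^ 3 - lam) * u w) (y x : ℝ) :
    HasDerivAt (fun t : ℝ => (deriv u ((t:ℂ) + y*I) * conj (u ((t:ℂ)+y*I))).im)
      ((Complex.I * ((x:ℂ)+y*I)^3 - lam).im * Complex.normSq (u ((x:ℂ)+y*I))) x := by
  set z := (x:ℂ) + y*I with hz
  have hD := comp_path (du_entire hu) (path_h y x)
  have hU := comp_path hu (path_h y x)
  have hP := hD.mul hU.star
  have hIm := (Complex.imCLM.hasFDerivAt).comp_hasDerivAt x hP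
  have : Complex.imCLM ((1 * deriv (deriv u) z) * star (u z) + deriv u z * star (1 * deriv u z))
      = (Complex.I * z^3 - lam).im * Complex.normSq (u z) := by
    rw [deriv2_eq hode]
    simp only [one_mul, Complex.imCLM_apply, Complex.add_im]
    rw [mul_assoc]
    rw [show star (u z) = conj (u z) from rfl, show star (deriv u z) = conj (deriv u z) from rfl,
      Complex.mul_conj, Complex.mul_conj]
    simp
  rw [this] at hIm
  exact hIm

lemma hasDerivAt_G {lam : ℂ} {u : ℂ → ℂ} (hu : Differentiable ℂ u)
    (hode : ∀ w : ℂ, iteratedDeriv 2 u w = (Complex.I * w ^ 3 - lam) * u w) (y x : ℝ) :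
    HasDerivAt (fun t : ℝ => (deriv u ((t:ℂ) + y*I) * conj (u ((t:ℂ)+y*I))).re)
      ((Complex.I * ((x:ℂ)+y*I)^3 - lam).re * Complex.normSq (u ((x:ℂ)+y*I))
        + Complex.normSq (deriv u ((x:ℂ)+y*I))) x := by
  set z := (x:ℂ) + y*I with hz
  have hD := comp_path (du_entire hu) (path_h y x)
  have hU := comp_path hu (path_h y x)
  have hP := hD.mul hU.star
  have hRe := (Complex.reCLM.hasFDerivAt).comp_hasDerivAt x hP
  have : Complex.reCLM ((1 * deriv (deriv u) z) * star (u z) + deriv u z * star (1 * deriv u z))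
      = (Complex.I * z^3 - lam).re * Complex.normSq (u z) + Complex.normSq (deriv u z) := by
    rw [deriv2_eq hode]
    simp only [one_mul, Complex.reCLM_apply, Complex.add_re]
    rw [mul_assoc]
    rw [show star (u z) = conj (u z) from rfl, show star (deriv u z) = conj (deriv u z) from rfl,
      Complex.mul_conj, Complex.mul_conj]
    simp
  rw [this] at hRe
  exact hRe

lemma hasDerivAt_H {lam : ℂ} {u : ℂ → ℂ} (hu : Differentiable ℂ u)
    (hode : ∀ w : ℂ, iteratedDeriv 2 u w = (Complex.I * w ^ 3 - lam) * u w) (x t : ℝ) :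
    HasDerivAt (fun s : ℝ => (deriv u ((x:ℂ) + s*I) * conj (u ((x:ℂ)+s*I))).im)
      ((Complex.I * ((x:ℂ)+t*I)^3 - lam).re * Complex.normSq (u ((x:ℂ)+t*I))
        - Complex.normSq (deriv u ((x:ℂ)+t*I))) t := by
  set z := (x:ℂ) + t*I with hz
  have hD := comp_path (du_entire hu) (path_v x t)
  have hU := comp_path hu (path_v x t)
  have hP := hD.mul hU.star
  have hIm := (Complex.imCLM.hasFDerivAt).comp_hasDerivAt t hP
  have : Complex.imCLM ((I * deriv (deriv u) z) * star (u z) + deriv u z * star (I * deriv u z))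
      = (Complex.I * z^3 - lam).re * Complex.normSq (u z) - Complex.normSq (deriv u z) := by
    rw [deriv2_eq hode]
    simp only [Complex.imCLM_apply, Complex.add_im]
    rw [show star (u z) = conj (u z) from rfl,
      show star (I * deriv u z) = conj I * conj (deriv u z) from by simp [star_mul']]
    rw [show I * ((Complex.I * z^3 - lam) * u z) * conj (u z)
        = I * ((Complex.I * z^3 - lam) * (u z * conj (u z))) from by ring,
      show deriv u z * (conj I * conj (deriv u z)) = conj I * (deriv u z * conj (deriv u z)) from by ring,
      Complex.mul_conj, Complex.mul_conj]
    simp [Complex.mul_im]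
    ring
  rw [this] at hIm
  exact hIm

lemma W_tendsto {u : ℂ → ℂ}
    (hdecay : ∀ M : ℝ, 0 < M → ∃ C₁ > (0 : ℝ), ∃ C₂ > (0 : ℝ), ∀ x y : ℝ, |y| ≤ M →
      ‖u (x + y * Complex.I)‖ + ‖deriv u (x + y * Complex.I)‖
        ≤ C₁ * Real.exp (-(|x| ^ C₂)))
    (y : ℝ) (l : Filter ℝ) (hl : Tendsto (fun t : ℝ => |t|) l atTop) :
    Tendsto (fun t : ℝ => deriv u ((t:ℂ) + y*I) * conj (u ((t:ℂ) + y*I))) l (nhds 0) := by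
  obtain ⟨C₁, hC₁, C₂, hC₂, hb⟩ := hdecay (|y| + 1) (by positivity)
  have he : Tendsto (fun t : ℝ => Real.exp (-(|t| ^ C₂))) l (nhds 0) := by
    have h1 : Tendsto (fun t : ℝ => |t| ^ C₂) l atTop := (tendsto_rpow_atTop hC₂).comp hl
    exact Real.tendsto_exp_atBot.comp (tendsto_neg_atBot_iff.mpr h1)
  have hg : Tendsto (fun t : ℝ => (C₁ * Real.exp (-(|t| ^ C₂)))^2) l (nhds 0) := by
    have := ((he.const_mul C₁).pow 2)
    simpa using this
  apply squeeze_zero_norm _ hg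
  intro t
  have hbt := hb t y (by linarith [abs_nonneg y])
  have h1 : ‖u ((t:ℂ) + y*I)‖ ≤ C₁ * Real.exp (-(|t| ^ C₂)) := by
    have := norm_nonneg (deriv u ((t:ℂ) + y*I)); linarith
  have h2 : ‖deriv u ((t:ℂ) + y*I)‖ ≤ C₁ * Real.exp (-(|t| ^ C₂)) := by
    have := norm_nonneg (u ((t:ℂ) + y*I)); linarith
  have : ‖deriv u ((t:ℂ) + y*I) * conj (u ((t:ℂ) + y*I))‖
      = ‖deriv u ((t:ℂ) + y*I)‖ * ‖u ((t:ℂ) + y*I)‖ := by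
    simp [map_mul]
  rw [this, sq]
  exact mul_le_mul h2 h1 (norm_nonneg _) (by positivity)

lemma zero_on_interval {u : ℂ → ℂ} (hu : Differentiable ℂ u) (hu_ne : u ≠ 0)
    (a y : ℝ) (h : ∀ t ∈ Set.Icc a (a+1), u ((t:ℂ) + y*I) = 0) : False := by
  have hA : AnalyticOnNhd ℂ u Set.univ := analyticOnNhd_univ_iff_differentiable.2 hu
  set z₀ : ℂ := (a:ℂ) + y*I with hz₀
  have hseq : Tendsto (fun n : ℕ => ((a + 1/(n+1) : ℝ) : ℂ) + y*I) atTop (nhds z₀) := by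
    have h1 : Tendsto (fun n : ℕ => a + 1/(n+1) : ℕ → ℝ) atTop (nhds a) := by
      have := tendsto_one_div_add_atTop_nhds_zero_nat (𝕜 := ℝ)
      simpa using (this.const_add a)
    have hc : Continuous (fun t : ℝ => (t:ℂ) + y*I) := by continuity
    exact hc.continuousAt.tendsto.comp h1
  have hseq' : Tendsto (fun n : ℕ => ((a + 1/(n+1) : ℝ) : ℂ) + y*I) atTop (nhdsWithin z₀ {z₀}ᶜ) := by
    apply tendsto_nhdsWithin_of_tendsto_nhds_of_eventually_within _ hseq
    filter_upwards with n
    simp only [Set.mem_compl_iff, Set.mem_singleton_iff]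
    intro hcon
    rw [hz₀] at hcon
    have h2 : ((a + 1/(n+1) : ℝ) : ℂ) = (a:ℂ) := add_right_cancel hcon
    have h3 := Complex.ofReal_inj.mp h2
    have : (0:ℝ) < 1/(n+1) := by positivity
    linarith
  have hfreq : ∃ᶠ z in nhdsWithin z₀ {z₀}ᶜ, u z = 0 := by
    apply hseq'.frequently
    apply Filter.Eventually.frequently
    filter_upwards with n
    apply h
    constructor
    · have : (0:ℝ) ≤ 1/(n+1) := by positivity
      linarith
    · have : (1:ℝ)/(n+1) ≤ 1 := by
        rw [div_le_one (by positivity)]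
        linarith [Nat.cast_nonneg (α := ℝ) n]
      linarith
  have := hA.eqOn_zero_of_preconnected_of_frequently_eq_zero isPreconnected_univ
    (Set.mem_univ z₀) hfreq
  exact hu_ne (funext fun z => this (Set.mem_univ z))
lemma negRight {lam : ℂ} {u : ℂ → ℂ}
    (hbeta : lam.im = 0) (hu : Differentiable ℂ u) (hu_ne : u ≠ 0)
    (hode : ∀ w : ℂ, iteratedDeriv 2 u w = (Complex.I * w ^ 3 - lam) * u w)
    (hdecay : ∀ M : ℝ, 0 < M → ∃ C₁ > (0 : ℝ), ∃ C₂ > (0 : ℝ), ∀ x y : ℝ, |y| ≤ M →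
      ‖u (x + y * Complex.I)‖ + ‖deriv u (x + y * Complex.I)‖
        ≤ C₁ * Real.exp (-(|x| ^ C₂)))
    (x y : ℝ) (hxy : Real.sqrt 3 * |y| ≤ x) :
    (deriv u ((x:ℂ) + y*I) * conj (u ((x:ℂ) + y*I))).im < 0 := by
  set F : ℝ → ℝ := fun t => (deriv u ((t:ℂ) + y*I) * conj (u ((t:ℂ) + y*I))).im with hFdef
  set D : ℝ → ℝ := fun t => (t^3 - 3*t*y^2) * Complex.normSq (u ((t:ℂ) + y*I)) with hDdef
  have hsq : 3 * y^2 ≤ x^2 := by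
    have h0 : (0:ℝ) ≤ Real.sqrt 3 * |y| := by positivity
    have h1 := mul_self_le_mul_self h0 hxy
    have h2 : Real.sqrt 3 * Real.sqrt 3 = 3 := Real.mul_self_sqrt (by norm_num)
    have h3 : |y| * |y| = y^2 := by rw [← _root_.sq_abs y]; ring
    nlinarith [h1, h2, h3]
  have hx0 : 0 ≤ x := le_trans (by positivity) hxy
  have hF : ∀ t, HasDerivAt F (D t) t := by
    intro t
    have h := hasDerivAt_F hu hode y t
    rwa [im_q lam hbeta t y] at h
  have hFc : Continuous F := by
    apply continuous_iff_continuousAt.2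
    exact fun t => (hF t).differentiableAt.continuousAt
  have hderivF : ∀ t, deriv F t = D t := fun t => (hF t).deriv
  -- monotone on [x, ∞)
  have hmono : MonotoneOn F (Set.Ici x) := by
    apply monotoneOn_of_deriv_nonneg (convex_Ici x) hFc.continuousOn
      (fun t _ => (hF t).differentiableAt.differentiableWithinAt)
    intro t ht
    rw [interior_Ici] at ht
    rw [hderivF]
    have htx : x < t := ht
    have ht2 : 3*y^2 ≤ t^2 := by nlinarith
    have h1 : 0 ≤ t^3 - 3*t*y^2 := by nlinarith [mul_nonneg (by linarith : (0:ℝ) ≤ t) (sub_nonneg.2 ht2)]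
    exact mul_nonneg h1 (Complex.normSq_nonneg _)
  -- a point where u ≠ 0
  have hex : ∃ x' ∈ Set.Icc (x+1) (x+2), u ((x':ℂ) + y*I) ≠ 0 := by
    by_contra hcon
    push_neg at hcon
    exact zero_on_interval hu hu_ne (x+1) y (by
      intro t ht
      exact hcon t ⟨ht.1, by linarith [ht.2]⟩)
  obtain ⟨x', hx'mem, hux'⟩ := hex
  obtain ⟨hx'1, hx'2⟩ := hx'mem
  -- a neighborhood where normSq u > 0
  have hcontu : Continuous (fun t : ℝ => Complex.normSq (u ((t:ℂ) + y*I))) :=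
    Complex.continuous_normSq.comp (hu.continuous.comp (by continuity))
  have hpos : (0:ℝ) < Complex.normSq (u ((x':ℂ) + y*I)) := Complex.normSq_pos.mpr hux'
  obtain ⟨ε, hε, hball⟩ := Metric.isOpen_iff.1
    (isOpen_lt continuous_const hcontu) x' (by simp only [Set.mem_setOf_eq]; exact hpos)
  set δ : ℝ := min (ε/2) (1/2) with hδdef
  have hδ0 : 0 < δ := by positivity
  have hδhalf : δ ≤ 1/2 := min_le_right _ _
  have hδball : ∀ t, |t - x'| ≤ δ → 0 < Complex.normSq (u ((t:ℂ) + y*I)) := by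
    intro t ht
    have : t ∈ Metric.ball x' ε := by
      rw [Metric.mem_ball, Real.dist_eq]
      have : δ < ε := lt_of_le_of_lt (min_le_left _ _) (by linarith)
      linarith [ht]
    have h2 := hball this
    simpa only [Set.mem_setOf_eq] using h2
  -- strict monotonicity on the small interval
  have hstrict : StrictMonoOn F (Set.Icc (x'-δ) (x'+δ)) := by
    apply strictMonoOn_of_deriv_pos (convex_Icc _ _) hFc.continuousOn
    intro t ht
    rw [interior_Icc] at ht
    rw [hderivF]
    have h1 : x + 1/2 ≤ t := by
      have := ht.1
      linarith [hδhalf]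
    have ht0 : 0 < t := by linarith
    have ht2 : 3*y^2 ≤ t^2 := by nlinarith
    have h2 : 0 < t^3 - 3*t*y^2 := by nlinarith [mul_pos ht0 (by nlinarith : (0:ℝ) < t^2 - 3*y^2)]
    have h3 : 0 < Complex.normSq (u ((t:ℂ) + y*I)) := by
      apply hδball
      rw [abs_le]
      constructor <;> [linarith [ht.1]; linarith [ht.2]]
    exact mul_pos h2 h3
  -- limit at +∞
  have htend : Tendsto F atTop (nhds 0) := by
    have h := W_tendsto hdecay y atTop tendsto_abs_atTop_atTop
    have := (Complex.continuous_im.tendsto 0).comp h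
    exact this
  -- assemble
  have key1 : F x ≤ F (x'-δ) := by
    apply hmono (Set.mem_Ici.2 le_rfl) (Set.mem_Ici.2 (by linarith)) (by linarith)
  have key2 : F (x'-δ) < F (x'+δ) := by
    apply hstrict (Set.mem_Icc.2 ⟨le_rfl, by linarith⟩)
      (Set.mem_Icc.2 ⟨by linarith, le_rfl⟩) (by linarith)
  have key3 : F (x'+δ) ≤ 0 := by
    apply ge_of_tendsto htend
    filter_upwards [eventually_ge_atTop (x'+δ)] with b hb
    exact hmono (Set.mem_Ici.2 (by linarith)) (Set.mem_Ici.2 (by linarith)) hb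
  calc F x ≤ F (x'-δ) := key1
    _ < F (x'+δ) := key2
    _ ≤ 0 := key3

lemma negLeft {lam : ℂ} {u : ℂ → ℂ}
    (hbeta : lam.im = 0) (hu : Differentiable ℂ u) (hu_ne : u ≠ 0)
    (hode : ∀ w : ℂ, iteratedDeriv 2 u w = (Complex.I * w ^ 3 - lam) * u w)
    (hdecay : ∀ M : ℝ, 0 < M → ∃ C₁ > (0 : ℝ), ∃ C₂ > (0 : ℝ), ∀ x y : ℝ, |y| ≤ M →
      ‖u (x + y * Complex.I)‖ + ‖deriv u (x + y * Complex.I)‖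
        ≤ C₁ * Real.exp (-(|x| ^ C₂)))
    (x y : ℝ) (hxy : x ≤ -(Real.sqrt 3 * |y|)) :
    (deriv u ((x:ℂ) + y*I) * conj (u ((x:ℂ) + y*I))).im < 0 := by
  set F : ℝ → ℝ := fun t => (deriv u ((t:ℂ) + y*I) * conj (u ((t:ℂ) + y*I))).im with hFdef
  set D : ℝ → ℝ := fun t => (t^3 - 3*t*y^2) * Complex.normSq (u ((t:ℂ) + y*I)) with hDdef
  have h0 : (0:ℝ) ≤ Real.sqrt 3 * |y| := by positivity
  have hsq : 3 * y^2 ≤ x^2 := by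
    have h1 := mul_self_le_mul_self h0 (by linarith : Real.sqrt 3 * |y| ≤ -x)
    have h2 : Real.sqrt 3 * Real.sqrt 3 = 3 := Real.mul_self_sqrt (by norm_num)
    have h3 : |y| * |y| = y^2 := by rw [← _root_.sq_abs y]; ring
    nlinarith [h1, h2, h3]
  have hx0 : x ≤ 0 := by linarith
  have hF : ∀ t, HasDerivAt F (D t) t := by
    intro t
    have h := hasDerivAt_F hu hode y t
    rwa [im_q lam hbeta t y] at h
  have hFc : Continuous F := by
    apply continuous_iff_continuousAt.2
    exact fun t => (hF t).differentiableAt.continuousAt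
  have hderivF : ∀ t, deriv F t = D t := fun t => (hF t).deriv
  -- antitone on (-∞, x]
  have hmono : AntitoneOn F (Set.Iic x) := by
    apply antitoneOn_of_deriv_nonpos (convex_Iic x) hFc.continuousOn
      (fun t _ => (hF t).differentiableAt.differentiableWithinAt)
    intro t ht
    rw [interior_Iic] at ht
    rw [hderivF]
    have htx : t < x := ht
    have ht2 : 3*y^2 ≤ t^2 := by nlinarith
    have h1 : t^3 - 3*t*y^2 ≤ 0 := by
      nlinarith [mul_nonneg (by linarith : (0:ℝ) ≤ -t) (sub_nonneg.2 ht2)]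
    exact mul_nonpos_of_nonpos_of_nonneg h1 (Complex.normSq_nonneg _)
  -- a point where u ≠ 0
  have hex : ∃ x' ∈ Set.Icc (x-2) (x-1), u ((x':ℂ) + y*I) ≠ 0 := by
    by_contra hcon
    push_neg at hcon
    exact zero_on_interval hu hu_ne (x-2) y (by
      intro t ht
      exact hcon t ⟨ht.1, by linarith [ht.2]⟩)
  obtain ⟨x', hx'mem, hux'⟩ := hex
  obtain ⟨hx'1, hx'2⟩ := hx'mem
  have hcontu : Continuous (fun t : ℝ => Complex.normSq (u ((t:ℂ) + y*I))) :=
    Complex.continuous_normSq.comp (hu.continuous.comp (by continuity))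
  have hpos : (0:ℝ) < Complex.normSq (u ((x':ℂ) + y*I)) := Complex.normSq_pos.mpr hux'
  obtain ⟨ε, hε, hball⟩ := Metric.isOpen_iff.1
    (isOpen_lt continuous_const hcontu) x' (by simp only [Set.mem_setOf_eq]; exact hpos)
  set δ : ℝ := min (ε/2) (1/2) with hδdef
  have hδ0 : 0 < δ := by positivity
  have hδhalf : δ ≤ 1/2 := min_le_right _ _
  have hδball : ∀ t, |t - x'| ≤ δ → 0 < Complex.normSq (u ((t:ℂ) + y*I)) := by
    intro t ht
    have : t ∈ Metric.ball x' ε := by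
      rw [Metric.mem_ball, Real.dist_eq]
      have : δ < ε := lt_of_le_of_lt (min_le_left _ _) (by linarith)
      linarith [ht]
    have h2 := hball this
    simpa only [Set.mem_setOf_eq] using h2
  -- strict antitonicity on the small interval
  have hstrict : StrictAntiOn F (Set.Icc (x'-δ) (x'+δ)) := by
    apply strictAntiOn_of_deriv_neg (convex_Icc _ _) hFc.continuousOn
    intro t ht
    rw [interior_Icc] at ht
    rw [hderivF]
    have h1 : t ≤ x - 1/2 := by
      have := ht.2
      linarith [hδhalf]
    have ht0 : t < 0 := by linarith
    have ht2 : 3*y^2 < t^2 := by nlinarith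
    have h2 : t^3 - 3*t*y^2 < 0 := by
      nlinarith [mul_pos (by linarith : (0:ℝ) < -t) (by linarith : (0:ℝ) < t^2 - 3*y^2)]
    have h3 : 0 < Complex.normSq (u ((t:ℂ) + y*I)) := by
      apply hδball
      rw [abs_le]
      constructor <;> [linarith [ht.1]; linarith [ht.2]]
    exact mul_neg_of_neg_of_pos h2 h3
  -- limit at -∞
  have htend : Tendsto F atBot (nhds 0) := by
    have h := W_tendsto hdecay y atBot tendsto_abs_atBot_atTop
    have := (Complex.continuous_im.tendsto 0).comp h
    exact this
  -- assemble
  have key1 : F x ≤ F (x'+δ) := by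
    apply hmono (Set.mem_Iic.2 (by linarith)) (Set.mem_Iic.2 le_rfl) (by linarith)
  have key2 : F (x'+δ) < F (x'-δ) := by
    apply hstrict (Set.mem_Icc.2 ⟨le_rfl, by linarith⟩)
      (Set.mem_Icc.2 ⟨by linarith, le_rfl⟩) (by linarith)
  have key3 : F (x'-δ) ≤ 0 := by
    apply ge_of_tendsto htend
    filter_upwards [eventually_le_atBot (x'-δ)] with b hb
    exact hmono (Set.mem_Iic.2 (by linarith)) (Set.mem_Iic.2 (by linarith)) hb
  calc F x ≤ F (x'+δ) := key1
    _ < F (x'-δ) := key2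
    _ ≤ 0 := key3

lemma cube_bound (a b t y : ℝ) (ha : 0 ≤ a) (ht0 : 0 ≤ t) (hty : t ≤ y)
    (hy : y^3 - 3*b^2*y - a ≤ 0) : t^3 - 3*b^2*t - a ≤ 0 := by
  rcases le_or_gt (t^2) (3*b^2) with h|h
  · nlinarith [mul_nonneg ht0 (sub_nonneg.2 h)]
  · nlinarith [mul_nonneg (by linarith : (0:ℝ) ≤ y - t)
      (by nlinarith [mul_nonneg ht0 (by linarith : (0:ℝ) ≤ y), sq_nonneg (y-t), sq_nonneg (y+t)] :
        (0:ℝ) ≤ y^2 + y*t + t^2 - 3*b^2)]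

lemma alpha_nonneg {lam : ℂ} {u : ℂ → ℂ}
    (hu : Differentiable ℂ u) (hu_ne : u ≠ 0)
    (hode : ∀ w : ℂ, iteratedDeriv 2 u w = (Complex.I * w ^ 3 - lam) * u w)
    (hdecay : ∀ M : ℝ, 0 < M → ∃ C₁ > (0 : ℝ), ∃ C₂ > (0 : ℝ), ∀ x y : ℝ, |y| ≤ M →
      ‖u (x + y * Complex.I)‖ + ‖deriv u (x + y * Complex.I)‖
        ≤ C₁ * Real.exp (-(|x| ^ C₂))) :
    0 ≤ lam.re := by
  by_contra hcon
  push_neg at hcon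
  set G : ℝ → ℝ := fun t => (deriv u ((t:ℂ) + (0:ℝ)*I) * conj (u ((t:ℂ) + (0:ℝ)*I))).re with hGdef
  set E : ℝ → ℝ := fun t => (Complex.I * ((t:ℂ) + (0:ℝ)*I)^3 - lam).re
      * Complex.normSq (u ((t:ℂ) + (0:ℝ)*I)) + Complex.normSq (deriv u ((t:ℂ) + (0:ℝ)*I)) with hEdef
  have hG : ∀ t, HasDerivAt G (E t) t := fun t => hasDerivAt_G hu hode 0 t
  have hE : ∀ t, 0 ≤ E t := by
    intro t
    have hre : (Complex.I * ((t:ℂ) + (0:ℝ)*I)^3 - lam).re = (0:ℝ)^3 - 3*t^2*0 - lam.re :=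
      re_q lam t 0
    rw [hEdef]
    simp only [hre]
    have h1 : (0:ℝ) ≤ -lam.re := by linarith
    nlinarith [Complex.normSq_nonneg (u ((t:ℂ) + (0:ℝ)*I)),
      Complex.normSq_nonneg (deriv u ((t:ℂ) + (0:ℝ)*I))]
  have hmono : Monotone G := by
    apply monotone_of_deriv_nonneg
    · exact fun t => (hG t).differentiableAt
    · intro t; rw [(hG t).deriv]; exact hE t
  have htop : Tendsto G atTop (nhds 0) := by
    have h := W_tendsto hdecay 0 atTop tendsto_abs_atTop_atTop
    exact (Complex.continuous_re.tendsto 0).comp h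
  have hbot : Tendsto G atBot (nhds 0) := by
    have h := W_tendsto hdecay 0 atBot tendsto_abs_atBot_atTop
    exact (Complex.continuous_re.tendsto 0).comp h
  have hzero : ∀ s, G s = 0 := by
    intro s
    have hle : G s ≤ 0 := by
      apply ge_of_tendsto htop
      filter_upwards [eventually_ge_atTop s] with b hb
      exact hmono hb
    have hge : (0:ℝ) ≤ G s := by
      apply le_of_tendsto hbot
      filter_upwards [eventually_le_atBot s] with b hb
      exact hmono hb
    linarith
  have hEzero : ∀ t, E t = 0 := by
    intro t
    have h1 : HasDerivAt G 0 t := by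
      have : G = fun _ => (0:ℝ) := funext hzero
      rw [this]
      exact hasDerivAt_const t 0
    exact ((hG t).unique h1)
  have huzero : ∀ t : ℝ, u ((t:ℂ) + (0:ℝ)*I) = 0 := by
    intro t
    have h1 := hEzero t
    rw [hEdef] at h1
    simp only [re_q lam t 0] at h1
    have h2 : Complex.normSq (u ((t:ℂ) + (0:ℝ)*I)) = 0 := by
      nlinarith [Complex.normSq_nonneg (u ((t:ℂ) + (0:ℝ)*I)),
        Complex.normSq_nonneg (deriv u ((t:ℂ) + (0:ℝ)*I))]
    exact Complex.normSq_eq_zero.mp h2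
  exact zero_on_interval hu hu_ne 0 0 (fun t _ => huzero t)

lemma vertStep {lam : ℂ} {u : ℂ → ℂ}
    (hu : Differentiable ℂ u)
    (hode : ∀ w : ℂ, iteratedDeriv 2 u w = (Complex.I * w ^ 3 - lam) * u w)
    (halpha : 0 ≤ lam.re) (x y0 : ℝ) (hy0 : 0 < y0)
    (hg : (Complex.I * ((x:ℂ) + y0*I)^3 - lam).re ≤ 0)
    (hbase : (deriv u ((x:ℂ) + (0:ℝ)*I) * conj (u ((x:ℂ) + (0:ℝ)*I))).im < 0) :
    (deriv u ((x:ℂ) + y0*I) * conj (u ((x:ℂ) + y0*I))).im < 0 := by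
  set H : ℝ → ℝ := fun s => (deriv u ((x:ℂ) + s*I) * conj (u ((x:ℂ) + s*I))).im with hHdef
  set E : ℝ → ℝ := fun s => (Complex.I * ((x:ℂ) + s*I)^3 - lam).re
      * Complex.normSq (u ((x:ℂ) + s*I)) - Complex.normSq (deriv u ((x:ℂ) + s*I)) with hEdef
  have hH : ∀ s, HasDerivAt H (E s) s := fun s => hasDerivAt_H hu hode x s
  have hHc : Continuous H := by
    apply continuous_iff_continuousAt.2
    exact fun t => (hH t).differentiableAt.continuousAt
  have hgy : y0^3 - 3*x^2*y0 - lam.re ≤ 0 := by rwa [re_q lam x y0] at hg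
  have hE : ∀ s ∈ Set.Icc (0:ℝ) y0, E s ≤ 0 := by
    intro s hs
    rw [hEdef]
    simp only [re_q lam x s]
    have h1 : s^3 - 3*x^2*s - lam.re ≤ 0 := cube_bound lam.re x s y0 halpha hs.1 hs.2 hgy
    nlinarith [Complex.normSq_nonneg (u ((x:ℂ) + s*I)),
      Complex.normSq_nonneg (deriv u ((x:ℂ) + s*I))]
  have hanti : AntitoneOn H (Set.Icc 0 y0) := by
    apply antitoneOn_of_deriv_nonpos (convex_Icc _ _) hHc.continuousOn
      (fun t _ => (hH t).differentiableAt.differentiableWithinAt)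
    intro t ht
    rw [interior_Icc] at ht
    rw [(hH t).deriv]
    exact hE t ⟨le_of_lt ht.1, le_of_lt ht.2⟩
  have := hanti (Set.mem_Icc.2 ⟨le_rfl, le_of_lt hy0⟩)
    (Set.mem_Icc.2 ⟨le_of_lt hy0, le_rfl⟩) (le_of_lt hy0)
  calc H y0 ≤ H 0 := this
    _ < 0 := hbase

/-- Let `u` be an eigenfunction of the cubic PT-symmetric oscillator
`-u'' - (iz)³u = lam·u` and suppose the eigenvalue `lam` is real.  Then
`Im(u'(z)·conj(u(z))) < 0` for every nonzero `z = r·e^{iθ}` with `r > 0` and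
`-π/6 ≤ θ ≤ 7π/6` which does not lie in `A₁ = {z : Re(iz³-lam) > 0, Im z > 0}`. -/
theorem im_wronskian_neg_region_real_eigenvalue
    (lam : ℂ) (u : ℂ → ℂ)
    (hbeta : lam.im = 0)
    (hu_entire : Differentiable ℂ u)
    (hu_ne : u ≠ 0)
    (hode : ∀ w : ℂ, iteratedDeriv 2 u w = (Complex.I * w ^ 3 - lam) * u w)
    (hdecay : ∀ M : ℝ, 0 < M → ∃ C₁ > (0 : ℝ), ∃ C₂ > (0 : ℝ), ∀ x y : ℝ, |y| ≤ M →
      ‖u (x + y * Complex.I)‖ + ‖deriv u (x + y * Complex.I)‖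
        ≤ C₁ * Real.exp (-(|x| ^ C₂))) :
    ∀ r θ : ℝ, 0 < r → -(π / 6) ≤ θ → θ ≤ 7 * π / 6 →
      (r * Complex.exp (θ * Complex.I)) ∉
        {v : ℂ | 0 < (Complex.I * v ^ 3 - lam).re ∧ 0 < v.im} →
      (deriv u (r * Complex.exp (θ * Complex.I))
        * conj (u (r * Complex.exp (θ * Complex.I)))).im < 0 := by
  intro r θ hr hθ1 hθ2 hA
  have hπ := Real.pi_pos
  have hz : (r:ℂ) * Complex.exp (↑θ * I)
      = ((r * Real.cos θ : ℝ):ℂ) + ((r * Real.sin θ : ℝ):ℂ) * I := by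
    rw [Complex.exp_mul_I, ← Complex.ofReal_cos, ← Complex.ofReal_sin]
    push_cast
    ring
  rw [hz] at hA ⊢
  set x : ℝ := r * Real.cos θ with hxdef
  set y : ℝ := r * Real.sin θ with hydef
  rcases lt_trichotomy (Real.sin θ) 0 with hsin | hsin | hsin
  · -- y < 0 : below the axis; θ ∈ [-π/6,0) ∪ (π, 7π/6]
    have hy : y < 0 := mul_neg_of_pos_of_neg hr hsin
    have habs : |y| = r * (-Real.sin θ) := by rw [abs_of_neg hy]; ring
    rcases lt_or_ge θ 0 with hneg | hpos
    · -- θ ∈ [-π/6, 0)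
      have h1 : 0 ≤ -θ := by linarith
      have h2 : -θ ≤ π/6 := by linarith
      have hcos : Real.sqrt 3 / 2 ≤ Real.cos θ := by
        have := Real.cos_le_cos_of_nonneg_of_le_pi h1 (by linarith : π/6 ≤ π) h2
        rwa [Real.cos_pi_div_six, Real.cos_neg] at this
      have hsinb : -Real.sin θ ≤ 1/2 := by
        have hmem1 : -θ ∈ Set.Icc (-(π/2)) (π/2) := ⟨by linarith, by linarith⟩
        have hmem2 : π/6 ∈ Set.Icc (-(π/2)) (π/2) := ⟨by linarith, by linarith⟩
        have := Real.strictMonoOn_sin.monotoneOn hmem1 hmem2 h2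
        rwa [Real.sin_pi_div_six, Real.sin_neg] at this
      apply negRight hbeta hu_entire hu_ne hode hdecay
      rw [habs]
      have hs3 : (0:ℝ) ≤ Real.sqrt 3 := Real.sqrt_nonneg 3
      have hs3' : Real.sqrt 3 ≤ 2 := by
        nlinarith [Real.sq_sqrt (by norm_num : (0:ℝ) ≤ 3)]
      rw [hxdef]
      nlinarith [hr.le, hcos, hsinb, hsin,
        mul_le_mul_of_nonneg_left hsinb (mul_nonneg hs3 hr.le),
        mul_le_mul_of_nonneg_left hcos hr.le]
    · -- θ ∈ (π, 7π/6]
      have hgtpi : π < θ := by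
        by_contra hle
        push_neg at hle
        exact absurd (Real.sin_nonneg_of_nonneg_of_le_pi hpos hle) (by linarith)
      set φ : ℝ := θ - π with hφdef
      have hφ1 : 0 < φ := by simp [hφdef]; linarith
      have hφ2 : φ ≤ π/6 := by simp [hφdef]; linarith
      have hcosθ : Real.cos θ = -Real.cos φ := by
        rw [show θ = φ + π by simp [hφdef], Real.cos_add]
        simp
      have hsinθ : Real.sin θ = -Real.sin φ := by
        rw [show θ = φ + π by simp [hφdef], Real.sin_add]
        simp
      have hcos : Real.sqrt 3 / 2 ≤ Real.cos φ := by
        have := Real.cos_le_cos_of_nonneg_of_le_pi hφ1.le (by linarith : π/6 ≤ π) hφ2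
        rwa [Real.cos_pi_div_six] at this
      have hsinb : Real.sin φ ≤ 1/2 := by
        have hmem1 : φ ∈ Set.Icc (-(π/2)) (π/2) := ⟨by linarith, by linarith⟩
        have hmem2 : π/6 ∈ Set.Icc (-(π/2)) (π/2) := ⟨by linarith, by linarith⟩
        have := Real.strictMonoOn_sin.monotoneOn hmem1 hmem2 hφ2
        rwa [Real.sin_pi_div_six] at this
      apply negLeft hbeta hu_entire hu_ne hode hdecay
      rw [habs, hxdef, hcosθ, hsinθ]
      have hs3 : (0:ℝ) ≤ Real.sqrt 3 := Real.sqrt_nonneg 3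
      have hs3' : Real.sqrt 3 ≤ 2 := by
        nlinarith [Real.sq_sqrt (by norm_num : (0:ℝ) ≤ 3)]
      nlinarith [hr.le, hcos, hsinb,
        mul_le_mul_of_nonneg_left hsinb (mul_nonneg hs3 hr.le),
        mul_le_mul_of_nonneg_left hcos hr.le]
  · -- y = 0 : θ = 0 or π
    have hy : y = 0 := by rw [hydef, hsin, mul_zero]
    obtain ⟨n, hn⟩ := Real.sin_eq_zero_iff.mp hsin
    have hn0 : (0:ℤ) ≤ n := by
      by_contra hc
      push_neg at hc
      have hn' : n ≤ -1 := by omega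
      have : (n:ℝ) ≤ -1 := by exact_mod_cast hn'
      nlinarith [hn, hθ1]
    have hn1 : n ≤ 1 := by
      by_contra hc
      push_neg at hc
      have : (2:ℝ) ≤ (n:ℝ) := by exact_mod_cast hc
      nlinarith [hn, hθ2]
    interval_cases n
    · -- θ = 0
      have hθ0 : θ = 0 := by simpa using hn.symm
      have hcos : Real.cos θ = 1 := by rw [hθ0, Real.cos_zero]
      apply negRight hbeta hu_entire hu_ne hode hdecay
      rw [hy, hxdef, hcos]
      simp [hr.le]
    · -- θ = π
      have hθ0 : θ = π := by simpa using hn.symm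
      have hcos : Real.cos θ = -1 := by rw [hθ0, Real.cos_pi]
      apply negLeft hbeta hu_entire hu_ne hode hdecay
      rw [hy, hxdef, hcos]
      simp [hr.le]
  · -- y > 0 : vertical descent
    have hy : 0 < y := mul_pos hr hsin
    have hre : (Complex.I * ((x:ℂ) + y*I)^3 - lam).re ≤ 0 := by
      by_contra hre'
      push_neg at hre'
      exact hA ⟨hre', by simpa using hy⟩
    have halpha : 0 ≤ lam.re := alpha_nonneg hu_entire hu_ne hode hdecay
    have hbase : (deriv u ((x:ℂ) + (0:ℝ)*I) * conj (u ((x:ℂ) + (0:ℝ)*I))).im < 0 := by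
      rcases le_or_gt 0 x with hx | hx
      · apply negRight hbeta hu_entire hu_ne hode hdecay
        simpa using hx
      · apply negLeft hbeta hu_entire hu_ne hode hdecay
        simpa using hx.le
    exact vertStep hu_entire hode halpha x y hy hre hbase
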